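/- Let P : ℕ → ℝ be a probability distribution supported on {1,...,n}, let m = ∑_{i=1}^{n} i·P(i), and define rtfp(x) = m - ∑_{i=x+1}^{n} (i-x)·P(i) and s(x) = ∑_{i=1}^{n} min(i,x)·P(i). Then rtfp(x) = s(x) for all x ≥ 0; i.e., the reuse-term footprint equals the Denning Recursion working-set size. -/
import Mathlib


/-- Working-set Correctness: the reuse-term footprint equals the Denning
Recursion working-set size. -/
theorem rtfp_eq_working_set
    (n : ℕ) (P : ℕ → ℝ)
    (hP : ∀ x, 0 ≤ P x)
    (hsupp : ∀ x, P x ≠ 0 → x ∈ Finset.Icc 1 n)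
    (hsum : ∑ x ∈ Finset.Icc 1 n, P x = 1)
    (m : ℝ) (hm : m = ∑ i ∈ Finset.Icc 1 n, (i : ℝ) * P i)
    (rtfp s : ℕ → ℝ)
    (hrtfp : ∀ x, rtfp x = m - ∑ i ∈ Finset.Icc (x + 1) n, ((i : ℝ) - (x : ℝ)) * P i)
    (hs : ∀ x, s x = ∑ i ∈ Finset.Icc 1 n, (min i x : ℝ) * P i) :
    ∀ x, rtfp x = s x := by
  intro x
  rw [hrtfp, hs, hm]
  have hsub : Finset.Icc (x + 1) n ⊆ Finset.Icc 1 n :=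
    Finset.Icc_subset_Icc_left (Nat.succ_le_succ (Nat.zero_le x))
  have h2 : ∑ i ∈ Finset.Icc (x + 1) n, ((i : ℝ) - (x : ℝ)) * P i
      = ∑ i ∈ Finset.Icc 1 n, (if x + 1 ≤ i then ((i : ℝ) - (x : ℝ)) * P i else 0) := by
    rw [← Finset.sum_subset hsub (fun i hi hni => by
      rw [if_neg (fun h => hni (Finset.mem_Icc.mpr ⟨h, (Finset.mem_Icc.mp hi).2⟩))])]
    exact Finset.sum_congr rfl fun i hi => (if_pos (Finset.mem_Icc.mp hi).1).symm
  rw [h2, ← Finset.sum_sub_distrib]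
  apply Finset.sum_congr rfl
  intro i hi
  by_cases h : x + 1 ≤ i
  · rw [if_pos h]
    have : min i x = x := min_eq_right (Nat.le_of_succ_le h)
    rw [← Nat.cast_min, this]
    ring
  · rw [if_neg h]
    have : min i x = i := min_eq_left (Nat.le_of_lt_succ (Nat.lt_of_not_le h))
    rw [← Nat.cast_min, this]
    ring
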